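/- Let f : [a, b] → ℝ be L-Lipschitz, let Δ > 0, and let G = { a + kΔ : k = 0, 1, …, N } with a + NΔ = b be a uniform grid. Let i ∈ G and j = i + Δ ∈ G be adjacent grid points, let p ∈ [0,1], and set x_p = p·i + (1−p)·j. Then | inf_{y ∈ [x_p, b]} f(y) − ( p · min_{g ∈ G, g ≥ i} f(g) + (1−p) · min_{g ∈ G, g ≥ j} f(g) ) | ≤ L·Δ/2. -/

import Mathlib

set_option maxHeartbeats 1000000


/-- The discretization-error bound `ε_A ≤ L·Δ/2` in the proof of Theorem E.1(b): for an
`L`-Lipschitz `f` on `[a,b]`, a uniform grid `G = {a + kΔ : k = 0,…,N}` with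
`a + NΔ = b`, adjacent grid points `i = a + k₀Δ` and `j = i + Δ`, `p ∈ [0,1]` and
`x_p = p·i + (1-p)·j`, the running minimum of `f` over `[x_p, b]` differs from the
`p`-interpolation of the grid-based running minima at `i` and `j` by at most `L·Δ/2`. -/
theorem stmt_18 (a Lc Δ : ℝ) (N k₀ : ℕ) (b : ℝ) (f : ℝ → ℝ)
    (hΔ : 0 < Δ) (hgrid : a + N * Δ = b) (hk₀ : k₀ < N)
    (hlip : ∀ x ∈ Set.Icc a b, ∀ y ∈ Set.Icc a b, |f x - f y| ≤ Lc * |x - y|)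
    (p : ℝ) (hp : p ∈ Set.Icc (0:ℝ) 1) :
    |sInf (f '' Set.Icc (p * (a + k₀ * Δ) + (1 - p) * (a + (k₀ + 1 : ℕ) * Δ)) b)
        - (p * (Finset.Icc k₀ N).inf' (Finset.nonempty_Icc.mpr (le_of_lt hk₀))
              (fun k => f (a + k * Δ))
           + (1 - p) * (Finset.Icc (k₀ + 1) N).inf' (Finset.nonempty_Icc.mpr hk₀)
              (fun k => f (a + k * Δ)))|
      ≤ Lc * Δ / 2 := by
  obtain ⟨hp0, hp1⟩ := hp
  have hk₀N : (k₀ : ℝ) + 1 ≤ (N : ℝ) := by exact_mod_cast hk₀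
  set xp : ℝ := p * (a + k₀ * Δ) + (1 - p) * (a + (k₀ + 1 : ℕ) * Δ) with hxp
  have hcast : ((k₀ + 1 : ℕ) : ℝ) = (k₀ : ℝ) + 1 := by push_cast; ring
  have hxp' : xp = a + (k₀ : ℝ) * Δ + (1 - p) * Δ := by rw [hxp, hcast]; ring
  have hgk : ∀ k : ℕ, k ≤ N → a + k * Δ ∈ Set.Icc a b := by
    intro k hk
    constructor
    · nlinarith [Nat.cast_nonneg (α := ℝ) k]
    · have : (k : ℝ) ≤ N := by exact_mod_cast hk
      nlinarith
  have hxpa : a ≤ xp := by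
    rw [hxp']
    nlinarith [Nat.cast_nonneg (α := ℝ) k₀]
  have hxpb : xp ≤ b := by
    rw [hxp']
    nlinarith
  have hsub : Set.Icc xp b ⊆ Set.Icc a b := Set.Icc_subset_Icc hxpa le_rfl
  have hab : a < b := by nlinarith
  have hLc : 0 ≤ Lc := by
    have h := hlip a ⟨le_rfl, hab.le⟩ b ⟨hab.le, le_rfl⟩
    have h2 : |a - b| = b - a := by
      rw [abs_sub_comm, abs_of_nonneg (by linarith)]
    rw [h2] at h
    have h3 : 0 ≤ Lc * (b - a) := le_trans (abs_nonneg _) h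
    nlinarith
  have hlip' : ∀ x ∈ Set.Icc a b, ∀ y ∈ Set.Icc a b, f x ≤ f y + Lc * |x - y| := by
    intro x hx y hy
    linarith [(abs_le.mp (hlip x hx y hy)).2, le_abs_self (f x - f y)]
  have hne : (f '' Set.Icc xp b).Nonempty := ⟨f xp, ⟨xp, ⟨le_rfl, hxpb⟩, rfl⟩⟩
  have hbdd : BddBelow (f '' Set.Icc xp b) := by
    refine ⟨f xp - Lc * (b - a), ?_⟩
    rintro z ⟨y, hy, rfl⟩
    have h := hlip' xp (hsub ⟨le_rfl, hxpb⟩) y (hsub hy)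
    have habs : |xp - y| ≤ b - a := by
      rw [abs_le]
      constructor
      · linarith [hy.2, hxpa]
      · linarith [hy.1, hxpb, hy.2]
    nlinarith
  set m := sInf (f '' Set.Icc xp b) with hm
  set m₁ := (Finset.Icc k₀ N).inf' (Finset.nonempty_Icc.mpr (le_of_lt hk₀))
      (fun k => f (a + k * Δ)) with hm₁
  set m₂ := (Finset.Icc (k₀ + 1) N).inf' (Finset.nonempty_Icc.mpr hk₀)
      (fun k => f (a + k * Δ)) with hm₂
  have hm_le : ∀ y ∈ Set.Icc xp b, m ≤ f y := fun y hy =>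
    csInf_le hbdd ⟨y, hy, rfl⟩
  have hgrid_in : ∀ k : ℕ, k₀ + 1 ≤ k → k ≤ N → (a + k * Δ) ∈ Set.Icc xp b := by
    intro k h1 h2
    refine ⟨?_, (hgk k h2).2⟩
    have : (k₀ : ℝ) + 1 ≤ (k : ℝ) := by exact_mod_cast h1
    rw [hxp']; nlinarith
  have hmm₂ : m ≤ m₂ := by
    obtain ⟨k, hk, hkeq⟩ := Finset.exists_mem_eq_inf' (Finset.nonempty_Icc.mpr hk₀ : (Finset.Icc (k₀ + 1) N).Nonempty)
      (fun k => f (a + k * Δ))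
    rw [hm₂, hkeq]
    exact hm_le _ (hgrid_in k (Finset.mem_Icc.mp hk).1 (Finset.mem_Icc.mp hk).2)
  have hmm₁ : m - Lc * ((1 - p) * Δ) ≤ m₁ := by
    obtain ⟨k, hk, hkeq⟩ := Finset.exists_mem_eq_inf'
      (Finset.nonempty_Icc.mpr (le_of_lt hk₀)) (fun k => f (a + k * Δ))
    obtain ⟨hk1, hk2⟩ := Finset.mem_Icc.mp hk
    rw [hm₁, hkeq]
    rcases eq_or_lt_of_le hk1 with heq | hlt
    · rw [← heq]
      have hx := hlip' xp (hsub ⟨le_rfl, hxpb⟩) (a + k₀ * Δ) (hgk k₀ hk₀.le)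
      have hdist : |xp - (a + (k₀ : ℝ) * Δ)| = (1 - p) * Δ := by
        rw [hxp', abs_of_nonneg (by nlinarith)]
        ring
      have hmxp : m ≤ f xp := hm_le xp ⟨le_rfl, hxpb⟩
      rw [hdist] at hx
      linarith
    · have : m ≤ f (a + k * Δ) := hm_le _ (hgrid_in k hlt hk2)
      nlinarith [mul_nonneg hLc (mul_nonneg (by linarith : (0:ℝ) ≤ 1 - p) hΔ.le)]
  have hdir1 : m - (p * m₁ + (1 - p) * m₂) ≤ Lc * Δ / 2 := by
    nlinarith [mul_le_mul_of_nonneg_left hmm₁ hp0,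
      mul_le_mul_of_nonneg_left hmm₂ (by linarith : (0:ℝ) ≤ 1 - p),
      mul_nonneg (mul_nonneg hLc hΔ.le) (mul_nonneg hp0 (by linarith : (0:ℝ) ≤ 1 - p)),
      sq_nonneg (p - 1/2), mul_nonneg hLc hΔ.le]
  have hdir2 : p * m₁ + (1 - p) * m₂ - m ≤ Lc * Δ / 2 := by
    have key : ∀ z ∈ f '' Set.Icc xp b, p * m₁ + (1 - p) * m₂ - Lc * Δ / 2 ≤ z := by
      rintro z ⟨y, hy, rfl⟩
      obtain ⟨hy1, hy2⟩ := hy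
      have hyab : y ∈ Set.Icc a b := hsub ⟨hy1, hy2⟩
      have hM1le : ∀ k : ℕ, k₀ ≤ k → k ≤ N → m₁ ≤ f (a + k * Δ) := by
        intro k h1 h2
        exact Finset.inf'_le _ (Finset.mem_Icc.mpr ⟨h1, h2⟩)
      have hM2le : ∀ k : ℕ, k₀ + 1 ≤ k → k ≤ N → m₂ ≤ f (a + k * Δ) := by
        intro k h1 h2
        exact Finset.inf'_le _ (Finset.mem_Icc.mpr ⟨h1, h2⟩)
      rcases le_or_gt y (a + ((k₀ : ℝ) + 1) * Δ) with hcase | hcase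
      · have hg0 : a + (k₀ : ℝ) * Δ ∈ Set.Icc a b := hgk k₀ hk₀.le
        have hg1 : a + ((k₀ : ℝ) + 1) * Δ ∈ Set.Icc a b := by
          have := hgk (k₀ + 1) hk₀
          rwa [hcast] at this
        have hd0 : a + (k₀ : ℝ) * Δ ≤ y := by rw [hxp'] at hy1; nlinarith
        have hM1a : m₁ ≤ f y + Lc * (y - (a + (k₀ : ℝ) * Δ)) := by
          have h := hlip' (a + (k₀ : ℝ) * Δ) hg0 y hyab
          have habs : |a + (k₀ : ℝ) * Δ - y| = y - (a + (k₀ : ℝ) * Δ) := by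
            rw [abs_of_nonpos (by linarith)]; ring
          rw [habs] at h
          exact le_trans (hM1le k₀ le_rfl hk₀.le) h
        have hg1f : ∀ mi : ℝ, mi ≤ f (a + ((k₀ : ℝ) + 1) * Δ) →
            mi ≤ f y + Lc * (a + ((k₀ : ℝ) + 1) * Δ - y) := by
          intro mi hmi
          have h := hlip' (a + ((k₀ : ℝ) + 1) * Δ) hg1 y hyab
          rw [abs_of_nonneg (by linarith)] at h
          linarith
        have hM1b : m₁ ≤ f y + Lc * (a + ((k₀ : ℝ) + 1) * Δ - y) := by
          apply hg1f
          have := hM1le (k₀ + 1) (by omega) hk₀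
          rwa [hcast] at this
        have hM2 : m₂ ≤ f y + Lc * (a + ((k₀ : ℝ) + 1) * Δ - y) := by
          apply hg1f
          have := hM2le (k₀ + 1) le_rfl hk₀
          rwa [hcast] at this
        have hylow : a + (k₀ : ℝ) * Δ + (1 - p) * Δ ≤ y := by rw [hxp'] at hy1; exact hy1
        rcases le_or_gt (y - (a + (k₀ : ℝ) * Δ)) (Δ / 2) with hhalf | hhalf
        · nlinarith [mul_le_mul_of_nonneg_left hM1a hp0,
            mul_le_mul_of_nonneg_left hM2 (by linarith : (0:ℝ) ≤ 1 - p)]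
        · nlinarith [mul_le_mul_of_nonneg_left hM1b hp0,
            mul_le_mul_of_nonneg_left hM2 (by linarith : (0:ℝ) ≤ 1 - p)]
      · set r : ℝ := (y - a) / Δ with hr
        have hrlow : (k₀ : ℝ) + 1 ≤ r := by
          rw [hr, le_div_iff₀ hΔ]; nlinarith
        have hrhigh : r ≤ (N : ℝ) := by
          rw [hr, div_le_iff₀ hΔ]; nlinarith [hy2]
        set kz : ℤ := ⌊r + 1/2⌋ with hkz
        have hkz1 : ((k₀ : ℤ) + 1 : ℤ) ≤ kz := by
          rw [hkz, Int.le_floor]; push_cast; linarith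
        have hkz2 : kz ≤ (N : ℤ) := by
          have : ⌊r + 1/2⌋ < (N : ℤ) + 1 := by
            rw [Int.floor_lt]; push_cast; linarith
          omega
        have hfl1 : (kz : ℝ) ≤ r + 1/2 := by rw [hkz]; exact Int.floor_le _
        have hfl2 : r + 1/2 < (kz : ℝ) + 1 := by rw [hkz]; exact Int.lt_floor_add_one _
        set k : ℕ := kz.toNat with hk
        have hkzk : (k : ℤ) = kz := Int.toNat_of_nonneg (by omega)
        have hkr : (k : ℝ) = (kz : ℝ) := by exact_mod_cast hkzk
        have hk1 : k₀ + 1 ≤ k := by omega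
        have hk2 : k ≤ N := by omega
        have hy_eq : y = a + r * Δ := by rw [hr]; field_simp; ring
        have hfk : f (a + (k : ℝ) * Δ) ≤ f y + Lc * (Δ / 2) := by
          have h := hlip' (a + (k : ℝ) * Δ) (hgk k hk2) y hyab
          have habs : |a + (k : ℝ) * Δ - y| ≤ Δ / 2 := by
            rw [hy_eq, hkr, abs_le]
            constructor
            · nlinarith
            · nlinarith
          nlinarith [abs_nonneg (a + (k : ℝ) * Δ - y)]
        have hM1 : m₁ ≤ f y + Lc * (Δ / 2) :=
          le_trans (hM1le k (by omega) hk2) hfk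
        have hM2 : m₂ ≤ f y + Lc * (Δ / 2) :=
          le_trans (hM2le k hk1 hk2) hfk
        nlinarith [mul_le_mul_of_nonneg_left hM1 hp0,
          mul_le_mul_of_nonneg_left hM2 (by linarith : (0:ℝ) ≤ 1 - p)]
    have := le_csInf hne key
    linarith
  rw [abs_le]
  constructor
  · linarith
  · linarith
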